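/- The differential-escort transform of order α of the exponential density f₁(x) = e^{-x} 𝟙_{[0,∞)}(x) equals the α-scaled q-exponential density: E_α f₁ = (f_q)_{(α)} with q = 2 - 1/α, where f_q(x) ∝ exp_q(-x) 𝟙_{[0,∞)}(x) and exp_q(x) = (1 + (1-q)x)₊^{1/(1-q)}. -/

import Mathlib

open MeasureTheory Set Filter Topology

/-- The Tsallis `q`-exponential `exp_q(x) = (1 + (1-q)x)₊^(1/(1-q))` (with
`exp_1 = exp`). -/
noncomputable def expQ (q x : ℝ) : ℝ :=
  if q = 1 then Real.exp x else max (1 + (1 - q) * x) 0 ^ (1 / (1 - q))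

/-- The exponential density `f₁(x) = e^{-x} 𝟙_{[0,∞)}(x)`. -/
noncomputable def expDensity : ℝ → ℝ := fun x => if 0 ≤ x then Real.exp (-x) else 0

/-- The normalized `q`-exponential density `f_q(x) = c_q exp_q(-x) 𝟙_{[0,∞)}(x)`. -/
noncomputable def qExpDensity (q : ℝ) : ℝ → ℝ :=
  fun x => if 0 ≤ x then expQ q (-x) / (∫ s in Set.Ioi (0:ℝ), expQ q (-s)) else 0

/-- The differential-escort transform of order `α` of the exponential density is
the `α`-scaled `q`-exponential density with `q = 2 - 1/α`: the function
`g = (f_q)_{(α)}`, i.e. `g(y) = α f_q(α y)`, satisfies the defining relation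
`g(y(x)) = f₁(x)^α` on the support of `f₁`, where `y(x) = ∫₀^x f₁(t)^(1-α) dt`,
and vanishes off the image of the support. -/
lemma normInt_neg (b : ℝ) (hb : b < 0) (hb1 : -1 < b) :
    ∫ s in Ioi (0:ℝ), max (1 - b * s) 0 ^ (1 / b) = 1 / (1 + b) := by
  have h1b : 0 < 1 + b := by linarith
  set r : ℝ := (1 + b) / b with hr
  have hrneg : r < 0 := div_neg_of_pos_of_neg h1b hb
  have hpos : ∀ s : ℝ, 0 ≤ s → 0 < 1 - b * s := by
    intro s hs
    nlinarith
  have hmax : ∀ s ∈ Ioi (0:ℝ), max (1 - b * s) 0 ^ (1/b) = (1 - b * s) ^ (1/b) := by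
    intro s hs
    rw [max_eq_left (hpos s (le_of_lt hs)).le]
  rw [setIntegral_congr_fun measurableSet_Ioi hmax]
  have hderiv : ∀ s ∈ Ici (0:ℝ),
      HasDerivAt (fun s => -((1 - b * s) ^ r) / (1 + b)) ((1 - b * s) ^ (1/b)) s := by
    intro s hs
    have h0 : HasDerivAt (fun s : ℝ => 1 - b * s) (-b) s := by
      simpa using ((hasDerivAt_id s).const_mul b).const_sub 1
    have h2 := (h0.rpow_const (p := r) (Or.inl (hpos s hs).ne')).neg.div_const (1 + b)
    convert h2 using 1
    · rfl
    · rfl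
    · rfl
    have h3 : r - 1 = 1/b := by rw [hr, div_sub_one hb.ne]; norm_num
    rw [h3]
    have hsc : -(-b * r) / (1 + b) = 1 := by
      rw [hr]; field_simp; exact div_self hb.ne
    calc (1 - b * s) ^ (1/b) = (-(-b * r) / (1 + b)) * (1 - b * s) ^ (1/b) := by
          rw [hsc]; ring
      _ = -(-b * r * (1 - b * s) ^ (1/b)) / (1 + b) := by ring
  have htend : Tendsto (fun s : ℝ => -((1 - b * s) ^ r) / (1 + b)) atTop (𝓝 0) := by
    have hbase : Tendsto (fun s : ℝ => 1 - b * s) atTop atTop := by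
      have : Tendsto (fun s : ℝ => (-b) * s) atTop atTop :=
        Tendsto.const_mul_atTop (by linarith) tendsto_id
      have := tendsto_atTop_add_const_left atTop 1 this
      simpa [sub_eq_add_neg, neg_mul] using this
    have hrp : Tendsto (fun x : ℝ => x ^ r) atTop (𝓝 0) := by
      have := tendsto_rpow_neg_atTop (y := -r) (by linarith)
      simpa using this
    have := ((hrp.comp hbase).neg).div_const (1 + b)
    simpa using this
  have hnonneg : ∀ s ∈ Ioi (0:ℝ), 0 ≤ (1 - b * s) ^ (1/b) := fun s hs =>
    Real.rpow_nonneg (hpos s (le_of_lt hs)).le _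
  have := integral_Ioi_of_hasDerivAt_of_nonneg' hderiv hnonneg htend
  rw [this]
  rw [zero_sub, neg_div, neg_neg]
  norm_num

lemma normInt_pos (b : ℝ) (hb : 0 < b) :
    ∫ s in Ioi (0:ℝ), max (1 - b * s) 0 ^ (1 / b) = 1 / (1 + b) := by
  have hM : (0:ℝ) < 1 / b := by positivity
  have hcont : Continuous fun s : ℝ => max (1 - b * s) 0 ^ (1 / b) := by
    apply Continuous.rpow_const
    · exact (continuous_const.sub (continuous_const.mul continuous_id)).max continuous_const
    · exact fun x => Or.inr hM.le
  have hzero : ∀ s ∈ Ioi (1/b), max (1 - b * s) 0 ^ (1/b) = 0 := by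
    intro s hs
    have : 1 - b * s < 0 := by
      have : 1 < b * s := by
        have := (div_lt_iff₀' hb).mp hs
        linarith
      linarith
    rw [max_eq_right this.le, Real.zero_rpow hM.ne']
  have h1 : IntegrableOn (fun s : ℝ => max (1 - b * s) 0 ^ (1/b)) (Ioc 0 (1/b)) :=
    hcont.integrableOn_Ioc
  have h2 : IntegrableOn (fun s : ℝ => max (1 - b * s) 0 ^ (1/b)) (Ioi (1/b)) := by
    rw [integrableOn_congr_fun hzero measurableSet_Ioi]
    exact integrableOn_zero
  rw [← Ioc_union_Ioi_eq_Ioi hM.le,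
    setIntegral_union (Ioc_disjoint_Ioi le_rfl) measurableSet_Ioi h1 h2,
    setIntegral_congr_fun measurableSet_Ioi hzero]
  simp only [integral_zero, add_zero]
  rw [← intervalIntegral.integral_of_le hM.le]
  have heq : EqOn (fun s : ℝ => max (1 - b * s) 0 ^ (1/b))
      (fun s : ℝ => (1 - b * s) ^ (1/b)) (Set.uIcc 0 (1/b)) := by
    intro s hs
    rw [Set.uIcc_of_le hM.le] at hs
    have : b * s ≤ 1 := by
      have := hs.2
      calc b * s ≤ b * (1/b) := by nlinarith [hs.1]
        _ = 1 := by field_simp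
    simp only []
    rw [max_eq_left (by linarith)]
  rw [intervalIntegral.integral_congr heq,
    intervalIntegral.integral_comp_sub_mul (fun u => u ^ (1/b)) hb.ne' 1]
  have e1 : 1 - b * (1/b) = 0 := by field_simp; ring
  have e2 : 1 - b * 0 = 1 := by ring
  rw [e1, e2, integral_rpow (Or.inl (by linarith : (-1:ℝ) < 1/b))]
  rw [Real.one_rpow, Real.zero_rpow (by positivity : 1/b + 1 ≠ 0)]
  simp only [smul_eq_mul]
  have h1b : (0:ℝ) < 1 + b := by linarith
  field_simp
  norm_num

lemma normInt1 : ∫ s in Ioi (0:ℝ), expQ 1 (-s) = 1 := by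
  simp only [expQ, if_pos rfl]
  exact integral_exp_neg_Ioi_zero

lemma normInt (α : ℝ) (hα : 0 < α) (hne : α ≠ 1) :
    ∫ s in Ioi (0:ℝ), expQ (2 - 1/α) (-s) = α := by
  have hq1 : (2 - 1/α) ≠ 1 := by
    intro h
    apply hne
    have : 1/α = 1 := by linarith
    field_simp at this
    linarith
  have h1q : 1 - (2 - 1/α) = 1/α - 1 := by ring
  set b := 1/α - 1 with hbdef
  have h1b : 1 + b = 1/α := by rw [hbdef]; ring
  have hInt : ∫ s in Ioi (0:ℝ), expQ (2 - 1/α) (-s)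
      = ∫ s in Ioi (0:ℝ), max (1 - b * s) 0 ^ (1/b) := by
    apply setIntegral_congr_fun measurableSet_Ioi
    intro s _
    simp only [expQ, if_neg hq1, h1q, mul_neg, ← sub_eq_add_neg]
  rw [hInt]
  rcases lt_or_gt_of_ne hne with h|h
  · have hb : 0 < b := by
      have := one_lt_one_div hα h
      rw [hbdef]; linarith
    rw [normInt_pos b hb, h1b, one_div_one_div]
  · have hb2 : 1/α < 1 := by rw [div_lt_one hα]; linarith
    have hb1 : 0 < 1/α := by positivity
    rw [normInt_neg b (by rw [hbdef]; linarith) (by rw [hbdef]; linarith), h1b, one_div_one_div]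

lemma Yval (α x : ℝ) (hx : 0 ≤ x) (hne : α ≠ 1) :
    ∫ t in (0:ℝ)..x, expDensity t ^ (1 - α) = (Real.exp ((α-1)*x) - 1)/(α-1) := by
  have hc : α - 1 ≠ 0 := sub_ne_zero.mpr hne
  have heq : EqOn (fun t => expDensity t ^ (1-α)) (fun t => Real.exp ((α-1)*t)) (uIcc 0 x) := by
    intro t ht
    rw [uIcc_of_le hx] at ht
    simp only [expDensity, if_pos ht.1]
    rw [← Real.exp_mul]
    ring_nf
  rw [intervalIntegral.integral_congr heq,
    intervalIntegral.integral_comp_mul_left (f := Real.exp) hc]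
  rw [integral_exp]
  rw [mul_zero, Real.exp_zero, smul_eq_mul]
  field_simp

lemma hq1_lem (α : ℝ) (hα : 0 < α) (hne : α ≠ 1) : (2 - 1/α) ≠ 1 := by
  intro h
  apply hne
  have h2 : 1/α = 1 := by linarith
  field_simp at h2
  linarith

lemma hbne_lem (α : ℝ) (hα : 0 < α) (hne : α ≠ 1) : (1/α - 1) ≠ 0 := by
  intro h
  apply hne
  have h2 : 1/α = 1 := by linarith
  field_simp at h2
  linarith

theorem stmt18 (α : ℝ) (hα : 0 < α) :
    (∀ x : ℝ, 0 ≤ x →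
      α * qExpDensity (2 - 1/α) (α * (∫ t in (0:ℝ)..x, expDensity t ^ (1 - α)))
        = expDensity x ^ α) ∧
    (∀ y : ℝ, y ∉ (fun x => ∫ t in (0:ℝ)..x, expDensity t ^ (1 - α)) '' Set.Ici (0:ℝ) →
      α * qExpDensity (2 - 1/α) (α * y) = 0) := by
  constructor
  · intro x hx
    by_cases hne : α = 1
    · subst hne
      have hI : ∫ t in (0:ℝ)..x, expDensity t ^ (1 - (1:ℝ)) = x := by
        simp [Real.rpow_zero]
      rw [hI, show (2 - 1/(1:ℝ)) = 1 by norm_num]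
      simp only [one_mul, qExpDensity, if_pos hx]
      rw [normInt1, div_one]
      simp [expQ, expDensity, hx, Real.rpow_one]
    · have hc : α - 1 ≠ 0 := sub_ne_zero.mpr hne
      have hbne := hbne_lem α hα hne
      have hq1 := hq1_lem α hα hne
      rw [Yval α x hx hne]
      set y := (Real.exp ((α-1)*x) - 1)/(α-1) with hy
      have hypos : 0 ≤ y := by
        rcases lt_or_gt_of_ne hne with h|h
        · refine div_nonneg_iff.mpr (Or.inr ⟨?_, by linarith⟩)
          have : Real.exp ((α-1)*x) ≤ 1 := by
            rw [Real.exp_le_one_iff]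
            nlinarith
          linarith
        · apply div_nonneg
          · have : 1 ≤ Real.exp ((α-1)*x) := by
              rw [Real.one_le_exp_iff]
              nlinarith
            linarith
          · linarith
      have h0y : 0 ≤ α * y := by positivity
      simp only [qExpDensity, if_pos h0y]
      rw [normInt α hα hne]
      simp only [expQ, if_neg hq1, show 1 - (2 - 1/α) = 1/α - 1 by ring]
      have key : 1 + (1/α - 1) * -(α * y) = Real.exp ((α-1)*x) := by
        rw [hy]
        field_simp
        ring
      rw [key, max_eq_left (Real.exp_pos _).le, ← Real.exp_mul]
      have h1a : (1:ℝ) - α ≠ 0 := fun h => hne (by linarith)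
      have harg : (α-1)*x * (1/(1/α - 1)) = -x * α := by
        rw [one_div, show 1/α - 1 = (1-α)/α by field_simp, inv_div]
        field_simp
        ring
      rw [harg]
      simp only [expDensity, if_pos hx]
      rw [← Real.exp_mul]
      field_simp
  · intro y hy
    by_cases h0y : 0 ≤ α * y
    · have hy0 : 0 ≤ y := by by_contra h; push_neg at h; nlinarith
      by_cases hne : α = 1
      · exfalso
        apply hy
        refine ⟨y, hy0, ?_⟩
        subst hne
        simp [Real.rpow_zero]
      · have hc : α - 1 ≠ 0 := sub_ne_zero.mpr hne
        have hbne := hbne_lem α hα hne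
        have hq1 := hq1_lem α hα hne
        by_cases hpos : 0 < 1 + (α - 1) * y
        · exfalso
          apply hy
          have hxnn : 0 ≤ Real.log (1 + (α-1)*y) / (α-1) := by
            rcases lt_or_gt_of_ne hne with h|h
            · exact div_nonneg_iff.mpr (Or.inr
                ⟨Real.log_nonpos hpos.le (by nlinarith), by linarith⟩)
            · apply div_nonneg
              · exact Real.log_nonneg (by nlinarith)
              · linarith
          refine ⟨Real.log (1 + (α-1)*y) / (α-1), hxnn, ?_⟩
          simp only []
          rw [Yval α _ hxnn hne]
          have h1 : (α-1) * (Real.log (1+(α-1)*y)/(α-1)) = Real.log (1+(α-1)*y) := by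
            field_simp
          rw [h1, Real.exp_log hpos]
          field_simp
          ring
        · push_neg at hpos
          simp only [qExpDensity, if_pos h0y, expQ, if_neg hq1,
            show 1 - (2 - 1/α) = 1/α - 1 by ring]
          have key : 1 + (1/α - 1) * -(α * y) = 1 + (α - 1) * y := by
            field_simp
            ring
          rw [key, max_eq_right hpos, Real.zero_rpow (one_div_ne_zero hbne),
            zero_div, mul_zero]
    · simp [qExpDensity, h0y]
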